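/- Let W be a finite antipodal set in ℝ^k whose affine span has dimension k′ (where k′ ≤ k). Then W has at most 2^{k′} elements. -/

import Mathlib

open MeasureTheory Set Pointwise ENNReal

lemma antipodal_card_le_two_pow_full (n : ℕ) (W : Finset (EuclideanSpace ℝ (Fin n)))
    (hW : ∀ x ∈ W, ∀ y ∈ W, x ≠ y →
      ∃ f : EuclideanSpace ℝ (Fin n) →ₗ[ℝ] ℝ, f x < f y ∧
        ∀ w ∈ W, f x ≤ f w ∧ f w ≤ f y)
    (hspan : affineSpan ℝ (W : Set (EuclideanSpace ℝ (Fin n))) = ⊤) :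
    W.card ≤ 2 ^ n := by
  classical
  set K : Set (EuclideanSpace ℝ (Fin n)) := convexHull ℝ (W : Set _) with hK
  have hKconv : Convex ℝ K := convex_convexHull ℝ _
  have hKcpt : IsCompact K := W.finite_toSet.isCompact_convexHull ℝ
  have hint : (interior K).Nonempty := by
    rw [hKconv.interior_nonempty_iff_affineSpan_eq_top, hK, affineSpan_convexHull]
    exact hspan
  have hpos : 0 < volume K :=
    lt_of_lt_of_le (isOpen_interior.measure_pos volume hint) (measure_mono interior_subset)
  have hfin : volume K ≠ ⊤ := hKcpt.measure_lt_top.ne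
  -- the midpoint bodies
  set S : EuclideanSpace ℝ (Fin n) → Set (EuclideanSpace ℝ (Fin n)) :=
    fun w => (· + (2:ℝ)⁻¹ • w) '' ((2:ℝ)⁻¹ • K) with hS
  have hmem : ∀ w u, u ∈ S w ↔ ∃ v ∈ K, u = (2:ℝ)⁻¹ • v + (2:ℝ)⁻¹ • w := by
    intro w u
    simp only [hS, Set.mem_image, Set.mem_smul_set]
    constructor
    · rintro ⟨_, ⟨v, hv, rfl⟩, rfl⟩; exact ⟨v, hv, rfl⟩
    · rintro ⟨v, hv, rfl⟩; exact ⟨_, ⟨v, hv, rfl⟩, rfl⟩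
  have hsub : ∀ w ∈ W, S w ⊆ K := by
    intro w hw u hu
    rw [hmem] at hu
    obtain ⟨v, hv, rfl⟩ := hu
    have hwK : w ∈ K := subset_convexHull ℝ _ hw
    have := hKconv hv hwK (by norm_num : (0:ℝ) ≤ 2⁻¹) (by norm_num : (0:ℝ) ≤ 2⁻¹) (by norm_num)
    simpa [smul_add] using this
  have hvol : ∀ w, volume (S w) = ENNReal.ofReal ((2:ℝ)⁻¹ ^ n) * volume K := by
    intro w
    rw [hS]
    simp only [Set.image_add_right]
    rw [measure_preimage_add_right, Measure.addHaar_smul]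
    congr 2
    rw [abs_of_nonneg (by positivity)]
    simp [finrank_euclideanSpace]
  have hmeas : ∀ w, MeasurableSet (S w) := by
    intro w
    simp only [hS, Set.image_add_right]
    exact ((hKcpt.isClosed.measurableSet.const_smul₀ ((2:ℝ)⁻¹)).preimage
      (measurable_add_const _))
  have hdisj : (W : Set (EuclideanSpace ℝ (Fin n))).Pairwise (Function.onFun (AEDisjoint volume) S) := by
    intro x hx y hy hxy
    obtain ⟨f, hfxy, hfb⟩ := hW x hx y hy hxy
    set c : ℝ := ((2:ℝ)⁻¹) * (f x + f y) with hc
    have hxK : ∀ v ∈ K, f x ≤ f v := fun v hv =>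
      convexHull_min (fun w hw => (hfb w hw).1) (convex_halfSpace_ge f.isLinear (f x)) hv
    have hyK : ∀ v ∈ K, f v ≤ f y := fun v hv =>
      convexHull_min (fun w hw => (hfb w hw).2) (convex_halfSpace_le f.isLinear (f y)) hv
    have hsub2 : S x ∩ S y ⊆ {u | f u = c} := by
      rintro u ⟨hux, huy⟩
      rw [hmem] at hux huy
      obtain ⟨v, hv, huv⟩ := hux
      obtain ⟨v', hv', huv'⟩ := huy
      have e1 : f u = 2⁻¹ * f v + 2⁻¹ * f x := by
        rw [huv, f.map_add, f.map_smul, f.map_smul, smul_eq_mul, smul_eq_mul]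
      have e2 : f u = 2⁻¹ * f v' + 2⁻¹ * f y := by
        rw [huv', f.map_add, f.map_smul, f.map_smul, smul_eq_mul, smul_eq_mul]
      have h1 : f u ≤ c := by rw [e1, hc]; nlinarith [hyK v hv]
      have h2 : c ≤ f u := by rw [e2, hc]; nlinarith [hxK v' hv']
      exact le_antisymm h1 h2
    have hfne : f ≠ 0 := by
      intro h; rw [h] at hfxy; simp at hfxy
    have hker : (LinearMap.ker f) ≠ ⊤ := fun h => hfne (LinearMap.ker_eq_top.mp h)
    -- the level set {u | f u = c} is a translate of the kernel
    obtain ⟨x₀, hx₀⟩ : ∃ x₀, f x₀ = c := by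
      refine ⟨(c / f y) • y + ((c - c / f y * f y) / f x) • x, ?_⟩
      by_cases hfy : f y = 0
      · have hfx : f x ≠ 0 := by intro h; rw [h, hfy] at hfxy; exact lt_irrefl _ hfxy
        simp only [f.map_add, f.map_smul, smul_eq_mul, hfy, mul_zero, zero_add, sub_zero]
        field_simp
      · simp [f.map_add, f.map_smul, smul_eq_mul, div_mul_cancel₀, hfy]
    have hlevel : {u | f u = c} = (· + x₀) '' (LinearMap.ker f : Set _) := by
      ext u
      simp only [Set.image_add_right, Set.mem_preimage, SetLike.mem_coe, LinearMap.mem_ker,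
        Set.mem_setOf_eq, f.map_add, f.map_neg, hx₀]
      constructor
      · intro h; rw [h]; ring
      · intro h; linarith
    have hnull : volume {u : EuclideanSpace ℝ (Fin n) | f u = c} = 0 := by
      rw [hlevel]
      simp only [Set.image_add_right]
      rw [measure_preimage_add_right]
      exact Measure.addHaar_submodule _ _ hker
    exact measure_mono_null hsub2 hnull
  -- counting
  have hunion : volume (⋃ w ∈ W, S w) = ∑ w ∈ W, volume (S w) :=
    measure_biUnion_finset₀ hdisj (fun w _ => (hmeas w).nullMeasurableSet)
  have hle : (W.card : ℝ≥0∞) * (ENNReal.ofReal ((2:ℝ)⁻¹ ^ n) * volume K) ≤ volume K := by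
    calc (W.card : ℝ≥0∞) * (ENNReal.ofReal ((2:ℝ)⁻¹ ^ n) * volume K)
        = ∑ w ∈ W, volume (S w) := by
          rw [Finset.sum_congr rfl (fun w _ => hvol w), Finset.sum_const, nsmul_eq_mul]
      _ = volume (⋃ w ∈ W, S w) := hunion.symm
      _ ≤ volume K := measure_mono (Set.iUnion₂_subset hsub)
  have h2 : (W.card : ℝ≥0∞) * ENNReal.ofReal ((2:ℝ)⁻¹ ^ n) ≤ 1 := by
    rw [← mul_assoc] at hle
    exact (ENNReal.le_div_iff_mul_le (Or.inl hpos.ne') (Or.inl hfin)).mpr hle |>.trans_eq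
      (ENNReal.div_self hpos.ne' hfin)
  have h3 : (W.card : ℝ≥0∞) ≤ 2 ^ n := by
    have he : ENNReal.ofReal ((2:ℝ)⁻¹ ^ n) = 2⁻¹ ^ n := by
      rw [ENNReal.ofReal_pow (by norm_num)]
      congr 1
      rw [ENNReal.ofReal_inv_of_pos (by norm_num), ENNReal.ofReal_ofNat]
    rw [he] at h2
    calc (W.card : ℝ≥0∞) = (W.card : ℝ≥0∞) * (2⁻¹ ^ n * 2 ^ n) := by
          rw [← ENNReal.inv_pow, ENNReal.inv_mul_cancel (by positivity) (by simp), mul_one]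
      _ = ((W.card : ℝ≥0∞) * 2⁻¹ ^ n) * 2 ^ n := by ring
      _ ≤ 1 * 2 ^ n := by exact mul_le_mul_left h2 _
      _ = 2 ^ n := one_mul _
  exact_mod_cast h3

/-- A finite antipodal set in `ℝ^k` whose affine span has dimension `k'` has
at most `2 ^ k'` elements. -/
theorem antipodal_card_le_two_pow_affDim (k k' : ℕ) (hk' : k' ≤ k)
    (W : Finset (EuclideanSpace ℝ (Fin k)))
    (hW : ∀ x ∈ W, ∀ y ∈ W, x ≠ y →
      ∃ f : EuclideanSpace ℝ (Fin k) →ₗ[ℝ] ℝ, f ≠ 0 ∧ f x < f y ∧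
        ∀ w ∈ W, f x ≤ f w ∧ f w ≤ f y)
    (hdim : Module.finrank ℝ (affineSpan ℝ (W : Set (EuclideanSpace ℝ (Fin k)))).direction = k') :
    W.card ≤ 2 ^ k' := by
  classical
  subst hdim
  rcases W.eq_empty_or_nonempty with rfl | ⟨w₀, hw₀⟩
  · simp
  set D := (affineSpan ℝ (W : Set (EuclideanSpace ℝ (Fin k)))).direction with hD
  set n := Module.finrank ℝ D with hn
  set φ : D ≃ₗᵢ[ℝ] EuclideanSpace ℝ (Fin n) := (stdOrthonormalBasis ℝ D).repr with hφ
  set L : EuclideanSpace ℝ (Fin k) →ₗ[ℝ] EuclideanSpace ℝ (Fin n) :=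
    φ.toLinearEquiv.toLinearMap ∘ₗ (D.orthogonalProjectionOnto).toLinearMap with hL
  set g : EuclideanSpace ℝ (Fin k) → EuclideanSpace ℝ (Fin n) := fun v => L (v - w₀) with hg
  have hmemD : ∀ w ∈ W, w - w₀ ∈ D := by
    intro w hw
    have := AffineSubspace.vsub_mem_direction
      (mem_affineSpan ℝ (Finset.mem_coe.mpr hw)) (mem_affineSpan ℝ (Finset.mem_coe.mpr hw₀))
    simpa [vsub_eq_sub] using this
  have hLD : ∀ v (hv : v ∈ D), L v = φ ⟨v, hv⟩ := by
    intro v hv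
    simp only [hL, LinearMap.comp_apply, ContinuousLinearMap.coe_coe]
    have h1 : D.orthogonalProjectionOnto v = ⟨v, hv⟩ :=
      D.orthogonalProjectionOnto_mem_subspace_eq_self ⟨v, hv⟩
    rw [h1]
    rfl
  have hgW : ∀ w (hw : w ∈ W), g w = φ ⟨w - w₀, hmemD w hw⟩ := fun w hw => hLD _ _
  have hinj : Set.InjOn g (W : Set (EuclideanSpace ℝ (Fin k))) := by
    intro a ha b hb hab
    rw [hgW a ha, hgW b hb] at hab
    have := φ.injective hab
    have := Subtype.ext_iff.mp this
    simpa [sub_left_injective] using sub_left_injective this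
  set W' : Finset (EuclideanSpace ℝ (Fin n)) := W.image g with hW'
  have hcard : W'.card = W.card := Finset.card_image_of_injOn hinj
  -- antipodality transfers
  have hW'antipodal : ∀ x' ∈ W', ∀ y' ∈ W', x' ≠ y' →
      ∃ f : EuclideanSpace ℝ (Fin n) →ₗ[ℝ] ℝ, f x' < f y' ∧
        ∀ w ∈ W', f x' ≤ f w ∧ f w ≤ f y' := by
    intro x' hx' y' hy' hxy'
    obtain ⟨x, hx, rfl⟩ := Finset.mem_image.mp hx'
    obtain ⟨y, hy, rfl⟩ := Finset.mem_image.mp hy'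
    have hxy : x ≠ y := fun h => hxy' (by rw [h])
    obtain ⟨f, -, hfxy, hfb⟩ := hW x hx y hy hxy
    refine ⟨f ∘ₗ D.subtype ∘ₗ φ.symm.toLinearEquiv.toLinearMap, ?_, ?_⟩
    · have ex : ∀ w (hw : w ∈ W),
          (f ∘ₗ D.subtype ∘ₗ φ.symm.toLinearEquiv.toLinearMap) (g w) = f w - f w₀ := by
        intro w hw
        rw [hgW w hw]
        simp [map_sub]
      rw [ex x hx, ex y hy]
      linarith
    · intro w' hw'
      obtain ⟨w, hw, rfl⟩ := Finset.mem_image.mp hw'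
      have ex : ∀ u (hu : u ∈ W),
          (f ∘ₗ D.subtype ∘ₗ φ.symm.toLinearEquiv.toLinearMap) (g u) = f u - f w₀ := by
        intro u hu
        rw [hgW u hu]
        simp [map_sub]
      rw [ex x hx, ex y hy, ex w hw]
      constructor
      · linarith [(hfb w hw).1]
      · linarith [(hfb w hw).2]
  -- the image spans everything
  have hspan : affineSpan ℝ (W' : Set (EuclideanSpace ℝ (Fin n))) = ⊤ := by
    have hne : ((W' : Set (EuclideanSpace ℝ (Fin n))) : Set _).Nonempty :=
      ⟨g w₀, Finset.mem_coe.mpr (Finset.mem_image_of_mem g hw₀)⟩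
    have hne2 : ((affineSpan ℝ (W' : Set (EuclideanSpace ℝ (Fin n)))) : Set _).Nonempty :=
      hne.mono (subset_affineSpan ℝ _)
    rw [← AffineSubspace.direction_eq_top_iff_of_nonempty hne2]
    rw [direction_affineSpan]
    -- W' = G '' W for the affine map G
    have hGaff : ∃ G : EuclideanSpace ℝ (Fin k) →ᵃ[ℝ] EuclideanSpace ℝ (Fin n),
        (⇑G = g) ∧ G.linear = L := by
      refine ⟨AffineMap.mk' g L w₀ ?_, rfl, rfl⟩
      intro p
      simp only [hg, vsub_eq_sub, vadd_eq_add, sub_self, map_zero, add_zero]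
    obtain ⟨G, hGg, hGL⟩ := hGaff
    have himg : (W' : Set (EuclideanSpace ℝ (Fin n))) = G '' (W : Set _) := by
      rw [hW', Finset.coe_image, hGg]
    rw [himg, ← AffineMap.vectorSpan_image_eq_submodule_map, hGL]
    have hvs : vectorSpan ℝ (W : Set (EuclideanSpace ℝ (Fin k))) = D := by
      rw [hD, direction_affineSpan]
    rw [hvs]
    -- map L D = ⊤
    rw [eq_top_iff]
    rintro z -
    refine Submodule.mem_map.mpr ⟨(φ.symm z : EuclideanSpace ℝ (Fin k)), (φ.symm z).2, ?_⟩
    rw [hLD _ (φ.symm z).2]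
    simp
  calc W.card = W'.card := hcard.symm
    _ ≤ 2 ^ n := antipodal_card_le_two_pow_full n W' hW'antipodal hspan
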